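/- Let N ≥ 1 and m ≥ 3. The kernel of the reduction homomorphism GL_N(ℤ) → GL_N(ℤ/mℤ) is torsion-free. -/
import Mathlib

open Finset

private lemma serre_natAbs_dvd {n : ℕ} {z : ℤ} (h : (n : ℤ) ∣ z) : n ∣ z.natAbs :=
  Int.natCast_dvd_natCast.mp (Int.dvd_natAbs.mpr h)

/-- Powers of a matrix with entries divisible by `q` have entries divisible by powers of `q`. -/
private lemma serre_pow_dvd {N : ℕ} (q : ℤ) (M : Matrix (Fin N) (Fin N) ℤ)
    (hq : ∀ i j, q ∣ M i j) : ∀ n : ℕ, ∀ i j, q ^ n ∣ (M ^ n) i j := by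
  intro n
  induction n with
  | zero => intro i j; simp
  | succ n ih =>
    intro i j
    have hM1 : (M ^ (n + 1)) i j = ∑ l, (M ^ n) i l * M l j := by
      rw [pow_succ, Matrix.mul_apply]
    rw [hM1, pow_succ]
    exact Finset.dvd_sum fun l _ => mul_dvd_mul (ih i l) (hq l j)

/-- The key step of Serre's lemma: if `1 + M ≡ 1 mod m` with `m ≥ 3` and `(1+M)^p = 1`
for a prime `p`, then `M = 0`. -/
private lemma serre_key {N : ℕ} (m : ℕ) (hm : 3 ≤ m) (M : Matrix (Fin N) (Fin N) ℤ)
    (hdvd : ∀ i j, (m : ℤ) ∣ M i j) (p : ℕ) (hp : p.Prime)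
    (hpow : (1 + M) ^ p = 1) : M = 0 := by
  by_contra hM
  obtain ⟨i0, j0, h0⟩ : ∃ i j, M i j ≠ 0 := by
    by_contra h
    push_neg at h
    exact hM (Matrix.ext fun i j => h i j)
  set q : ℕ := Finset.univ.gcd (fun ij : Fin N × Fin N => (M ij.1 ij.2).natAbs) with hqdef
  have hqN : ∀ i j, q ∣ (M i j).natAbs := fun i j =>
    Finset.gcd_dvd (Finset.mem_univ (i, j))
  have hqdvd : ∀ i j, (q : ℤ) ∣ M i j := fun i j =>
    Int.dvd_natAbs.mp (Int.natCast_dvd_natCast.mpr (hqN i j))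
  have hmq : m ∣ q := Finset.dvd_gcd fun ij _ => serre_natAbs_dvd (hdvd ij.1 ij.2)
  have hq0 : q ≠ 0 := by
    intro h
    apply h0
    have := hqN i0 j0
    rw [h, Nat.zero_dvd] at this
    exact Int.natAbs_eq_zero.mp this
  have hq3 : 3 ≤ q := le_trans hm (Nat.le_of_dvd (Nat.pos_of_ne_zero hq0) hmq)
  have hMn := serre_pow_dvd (q : ℤ) M hqdvd
  -- binomial expansion
  have hbin : (M + 1) ^ p = ∑ k ∈ range (p + 1), p.choose k • M ^ k := by
    rw [Commute.add_pow (Commute.one_right M)]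
    refine Finset.sum_congr rfl fun k hk => ?_
    rw [one_pow, mul_one, nsmul_eq_mul, Nat.cast_comm]
  have h1 : ∑ k ∈ range (p + 1), p.choose k • M ^ k = 1 := by
    rw [← hbin, add_comm]; exact hpow
  have h2 : ∑ k ∈ range p, p.choose (k + 1) • M ^ (k + 1) = 0 := by
    rw [Finset.sum_range_succ' (fun k => p.choose k • M ^ k) p] at h1
    simpa using h1
  obtain ⟨t, ht⟩ : ∃ t, p = t + 1 := ⟨p - 1, (Nat.succ_pred_eq_of_pos hp.pos).symm⟩
  have h3 : (∑ k ∈ range t, p.choose (k + 2) • M ^ (k + 2)) + p • M = 0 := by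
    rw [ht, Finset.sum_range_succ' (fun k => (t + 1).choose (k + 1) • M ^ (k + 1)) t,
      ← ht] at h2
    simpa using h2
  have h4 : ∀ i j, (p : ℤ) * M i j =
      -∑ k ∈ range t, (p.choose (k + 2) : ℤ) * (M ^ (k + 2)) i j := by
    intro i j
    have := congrArg (fun X : Matrix (Fin N) (Fin N) ℤ => X i j) h3
    simp only [Matrix.add_apply, Matrix.sum_apply, Matrix.smul_apply, Matrix.zero_apply] at this
    simp only [nsmul_eq_mul] at this
    linarith [this]
  -- first claim: q ∣ p, hence q = p
  have claim1 : ∀ ij : Fin N × Fin N, q ^ 2 ∣ p * (M ij.1 ij.2).natAbs := by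
    intro ij
    have h5 : ((q : ℤ)) ^ 2 ∣ (p : ℤ) * M ij.1 ij.2 := by
      rw [h4 ij.1 ij.2, dvd_neg]
      exact Finset.dvd_sum fun k _ =>
        dvd_mul_of_dvd_right ((pow_dvd_pow (q : ℤ) (by omega)).trans (hMn (k + 2) ij.1 ij.2)) _
    have := serre_natAbs_dvd (n := q ^ 2) (by push_cast; exact h5)
    rwa [Int.natAbs_mul, Int.natAbs_natCast] at this
  have hq2 : q ^ 2 ∣ p * q := by
    have hgd : q ^ 2 ∣ Finset.univ.gcd
        (fun ij : Fin N × Fin N => p * (M ij.1 ij.2).natAbs) :=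
      Finset.dvd_gcd fun ij _ => claim1 ij
    rwa [Finset.gcd_mul_left, normalize_eq, ← hqdef] at hgd
  have hqp : q ∣ p := by
    have h' : q * q ∣ p * q := by rwa [← pow_two]
    exact (Nat.mul_dvd_mul_iff_right (Nat.pos_of_ne_zero hq0)).mp h'
  have hqp' : q = p := (hp.eq_one_or_self_of_dvd q hqp).resolve_left (by omega)
  have hp3 : 3 ≤ p := hqp' ▸ hq3
  -- second claim: p^2 ∣ every entry of M
  have claim2 : ∀ i j, (p : ℤ) ^ 2 ∣ M i j := by
    intro i j
    have h6 : ((p : ℤ)) ^ 3 ∣ (p : ℤ) * M i j := by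
      rw [h4 i j, dvd_neg]
      refine Finset.dvd_sum fun k _ => ?_
      have hent : ((p : ℤ)) ^ (k + 2) ∣ (M ^ (k + 2)) i j := by
        have := hMn (k + 2) i j
        rwa [hqp'] at this
      rcases Nat.eq_zero_or_pos k with hk | hk
      · subst hk
        have hch : (p : ℤ) ∣ (p.choose 2 : ℤ) :=
          Int.natCast_dvd_natCast.mpr (hp.dvd_choose_self (by norm_num) (by omega))
        calc ((p : ℤ)) ^ 3 = (p : ℤ) * (p : ℤ) ^ 2 := by ring
        _ ∣ (p.choose 2 : ℤ) * (M ^ 2) i j := mul_dvd_mul hch (by simpa using hent)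
        _ = (p.choose (0 + 2) : ℤ) * (M ^ (0 + 2)) i j := by norm_num
      · exact dvd_mul_of_dvd_right ((pow_dvd_pow (p : ℤ) (by omega)).trans hent) _
    have hpne : (p : ℤ) ≠ 0 := by positivity
    have : (p : ℤ) * (p : ℤ) ^ 2 ∣ (p : ℤ) * M i j := by
      calc (p : ℤ) * (p : ℤ) ^ 2 = (p : ℤ) ^ 3 := by ring
      _ ∣ _ := h6
    exact (mul_dvd_mul_iff_left hpne).mp this
  -- contradiction: p^2 ∣ q = p
  have hfin : p ^ 2 ∣ q :=
    Finset.dvd_gcd fun ij _ => serre_natAbs_dvd (by push_cast; exact claim2 ij.1 ij.2)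
  rw [hqp'] at hfin
  have := Nat.le_of_dvd hp.pos hfin
  nlinarith [this, hp3]

/-- Auxiliary matrix form of Serre's lemma. -/
private lemma serre_aux {N : ℕ} (m : ℕ) (hm : 3 ≤ m) (X : Matrix (Fin N) (Fin N) ℤ)
    (hX : X.map (Int.cast : ℤ → ZMod m) = 1) :
    ∀ r : ℕ, 1 ≤ r → X ^ r = 1 → X = 1 := by
  intro r
  induction r using Nat.strong_induction_on with
  | _ r ih =>
    intro hr hpow
    rcases eq_or_lt_of_le hr with h1 | h1
    · rw [← h1, pow_one] at hpow
      exact hpow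
    · have hr1 : r ≠ 1 := by omega
      have hr0 : r ≠ 0 := by omega
      set p := r.minFac with hpdef
      have hp : p.Prime := Nat.minFac_prime hr1
      set s := r / p with hsdef
      have hsp : s * p = r := Nat.div_mul_cancel (Nat.minFac_dvd r)
      have hs0 : s ≠ 0 := by
        intro h
        rw [h, zero_mul] at hsp
        exact hr0 hsp.symm
      have hslt : s < r := Nat.div_lt_self (Nat.pos_of_ne_zero hr0) hp.one_lt
      -- X^s is congruent to 1 mod m
      have hXs : (X ^ s).map (Int.cast : ℤ → ZMod m) = 1 := by
        have h := map_pow ((Int.castRingHom (ZMod m)).mapMatrix) X s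
        simp only [RingHom.mapMatrix_apply, Int.coe_castRingHom] at h
        rw [h, hX, one_pow]
      have hdvd : ∀ i j, (m : ℤ) ∣ (X ^ s - 1) i j := by
        intro i j
        have := congrArg (fun Y : Matrix (Fin N) (Fin N) (ZMod m) => Y i j) hXs
        simp only [Matrix.map_apply] at this
        have hcast : (((X ^ s - 1) i j : ℤ) : ZMod m) = 0 := by
          push_cast [Matrix.sub_apply]
          rw [this]
          rcases eq_or_ne i j with rfl | hij
          · simp [Matrix.one_apply_eq]
          · simp [Matrix.one_apply_ne hij]
        exact_mod_cast (ZMod.intCast_zmod_eq_zero_iff_dvd _ _).mp hcast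
      have hXs1 : X ^ s = 1 := by
        have hk := serre_key m hm (X ^ s - 1) hdvd p hp (by
          rw [add_sub_cancel]
          rw [← pow_mul, hsp]
          exact hpow)
        have : X ^ s - 1 = 0 := hk
        linear_combination (norm := abel) this
      exact ih s hslt (Nat.one_le_iff_ne_zero.mpr hs0) hXs1

/-- Serre's lemma: for `m ≥ 3`, the kernel of the reduction map
`GL_N(ℤ) → GL_N(ℤ/mℤ)` is torsion-free. -/
theorem ker_reduction_torsionFree (N : ℕ) (hN : 1 ≤ N) (m : ℕ) (hm : 3 ≤ m)
    (A : GL (Fin N) ℤ)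
    (hA : A ∈ (Matrix.GeneralLinearGroup.map (n := Fin N) (Int.castRingHom (ZMod m))).ker)
    (r : ℕ) (hr : 1 ≤ r) (hpow : A ^ r = 1) : A = 1 := by
  rw [MonoidHom.mem_ker] at hA
  have hX : ((A : Matrix (Fin N) (Fin N) ℤ)).map (Int.cast : ℤ → ZMod m) = 1 := by
    have := congrArg (Units.val) hA
    simpa [Matrix.GeneralLinearGroup.map, RingHom.mapMatrix_apply] using this
  have hXpow : (A : Matrix (Fin N) (Fin N) ℤ) ^ r = 1 := by
    have := congrArg (Units.val) hpow
    simpa using this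
  have := serre_aux m hm (A : Matrix (Fin N) (Fin N) ℤ) hX r hr hXpow
  exact Units.ext this
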